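/- Let h be the inverse of g(u) = ∫₀^u (1 + 2κα²|s|^{2(2α-1)})^{1/2} ds (extended oddly), with 0 < α < 1/2 and κ > 0. Then for all t > 0: 2α·h(t) ≤ 2α·h'(t)·t ≤ h(t). -/

import Mathlib

open Real Filter MeasureTheory Set

/-- The change-of-variable function `g` (inverse of `h`). -/
noncomputable def gfun (κ α : ℝ) (u : ℝ) : ℝ :=
  ∫ s in (0:ℝ)..u, Real.sqrt (1 + 2*κ*α^2 * |s| ^ (2*(2*α-1)))

namespace Stmt5Aux

/-- integrability of |x|^r on intervals for -1 < r -/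
lemma abs_rpow_intInt {r : ℝ} (hr : -1 < r) (a b : ℝ) :
    IntervalIntegrable (fun x : ℝ => |x| ^ r) volume a b := by
  have H : ∀ c : ℝ, 0 ≤ c → IntervalIntegrable (fun x : ℝ => |x| ^ r) volume 0 c := by
    intro c hc
    have h1 : IntervalIntegrable (fun x : ℝ => x ^ r) volume 0 c :=
      intervalIntegral.intervalIntegrable_rpow' hr
    rw [intervalIntegrable_iff, uIoc_of_le hc] at h1 ⊢
    exact h1.congr_fun (fun x hx => by rw [abs_of_pos hx.1]) measurableSet_Ioc
  have H2 : ∀ c : ℝ, IntervalIntegrable (fun x : ℝ => |x| ^ r) volume 0 c := by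
    intro c
    rcases le_total 0 c with hc | hc
    · exact H c hc
    · rw [IntervalIntegrable.iff_comp_neg]
      simpa using H (-c) (by linarith)
  exact (H2 a).symm.trans (H2 b)

variable {κ α : ℝ}

lemma sqrt_one_add_le {y : ℝ} (hy : 0 ≤ y) :
    Real.sqrt (1 + y) ≤ 1 + Real.sqrt y := by
  have h1 : (1:ℝ) + y ≤ (1 + Real.sqrt y)^2 := by
    have := Real.sq_sqrt hy
    nlinarith [Real.sqrt_nonneg y]
  calc Real.sqrt (1 + y) ≤ Real.sqrt ((1 + Real.sqrt y)^2) := Real.sqrt_le_sqrt h1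
  _ = 1 + Real.sqrt y := Real.sqrt_sq (by positivity)

lemma gint_bound (hκ : 0 < κ) (hα0 : 0 < α) (s : ℝ) :
    Real.sqrt (1 + 2*κ*α^2 * |s| ^ (2*(2*α-1)))
      ≤ 1 + Real.sqrt (2*κ*α^2) * |s| ^ (2*α-1) := by
  have hc : (0:ℝ) ≤ 2*κ*α^2 := by positivity
  have h1 : (0:ℝ) ≤ 2*κ*α^2 * |s| ^ (2*(2*α-1)) :=
    mul_nonneg hc (Real.rpow_nonneg (abs_nonneg s) _)
  refine (sqrt_one_add_le h1).trans ?_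
  have h4 : Real.sqrt (2*κ*α^2 * |s| ^ (2*(2*α-1)))
      = Real.sqrt (2*κ*α^2) * |s| ^ (2*α-1) := by
    rw [Real.sqrt_mul hc]
    congr 1
    rw [Real.sqrt_eq_rpow, ← Real.rpow_mul (abs_nonneg s)]
    congr 1
    ring
  rw [h4]

lemma gint_integrable (hκ : 0 < κ) (hα0 : 0 < α) (hα1 : α < 1/2) (a b : ℝ) :
    IntervalIntegrable (fun s : ℝ => Real.sqrt (1 + 2*κ*α^2 * |s| ^ (2*(2*α-1)))) volume a b := by
  have hcont : ∀ y : ℝ, y ≠ 0 →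
      ContinuousAt (fun s : ℝ => Real.sqrt (1 + 2*κ*α^2 * |s| ^ (2*(2*α-1)))) y := by
    intro y hy
    have h1 : ContinuousAt (fun s : ℝ => |s| ^ (2*(2*α-1))) y :=
      (Real.continuousAt_rpow_const |y| _ (Or.inl (abs_ne_zero.2 hy))).comp
        continuous_abs.continuousAt
    exact (continuousAt_const.add (continuousAt_const.mul h1)).sqrt
  have hmeas : Measurable fun s : ℝ => Real.sqrt (1 + 2*κ*α^2 * |s| ^ (2*(2*α-1))) := by
    apply measurable_of_continuousOn_compl_singleton (0:ℝ)
    exact continuousOn_of_forall_continuousAt fun x hx => hcont x hx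
  have hdom : IntervalIntegrable
      (fun s : ℝ => 1 + Real.sqrt (2*κ*α^2) * |s| ^ (2*α-1)) volume a b := by
    refine intervalIntegrable_const.add ?_
    exact (abs_rpow_intInt (by linarith) a b).const_mul _
  refine hdom.mono_fun hmeas.aestronglyMeasurable ?_
  refine Filter.Eventually.of_forall fun s => ?_
  have h0 : (0:ℝ) ≤ 1 + Real.sqrt (2*κ*α^2) * |s| ^ (2*α-1) := by positivity
  simp only [Real.norm_eq_abs]
  rw [abs_of_nonneg (Real.sqrt_nonneg _), abs_of_nonneg h0]
  exact gint_bound hκ hα0 s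

lemma gint_one_le (hκ : 0 < κ) (s : ℝ) :
    1 ≤ Real.sqrt (1 + 2*κ*α^2 * |s| ^ (2*(2*α-1))) := by
  have h1 : (0:ℝ) ≤ 2*κ*α^2 * |s| ^ (2*(2*α-1)) := by
    have := Real.rpow_nonneg (abs_nonneg s) (2*(2*α-1))
    positivity
  calc (1:ℝ) = Real.sqrt 1 := Real.sqrt_one.symm
  _ ≤ _ := Real.sqrt_le_sqrt (by linarith)

lemma gfun_strictMono (hκ : 0 < κ) (hα0 : 0 < α) (hα1 : α < 1/2) :
    StrictMono (gfun κ α) := by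
  intro a b hab
  have key := intervalIntegral.integral_add_adjacent_intervals
    (gint_integrable hκ hα0 hα1 0 a) (gint_integrable hκ hα0 hα1 a b)
  have pos : (b - a : ℝ) ≤ ∫ s in a..b,
      Real.sqrt (1 + 2*κ*α^2 * |s| ^ (2*(2*α-1))) := by
    calc b - a = ∫ _ in a..b, (1:ℝ) := by simp
    _ ≤ _ := intervalIntegral.integral_mono_on hab.le intervalIntegrable_const
        (gint_integrable hκ hα0 hα1 a b) (fun s _ => gint_one_le hκ s)
  simp only [gfun]
  linarith [key, pos]

lemma gfun_hasDeriv (hκ : 0 < κ) (hα0 : 0 < α) (hα1 : α < 1/2) {x : ℝ} (hx : 0 < x) :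
    HasDerivAt (gfun κ α) (Real.sqrt (1 + 2*κ*α^2 * |x| ^ (2*(2*α-1)))) x := by
  have hcont : ∀ y : ℝ, y ≠ 0 →
      ContinuousAt (fun s : ℝ => Real.sqrt (1 + 2*κ*α^2 * |s| ^ (2*(2*α-1)))) y := by
    intro y hy
    have h1 : ContinuousAt (fun s : ℝ => |s| ^ (2*(2*α-1))) y :=
      (Real.continuousAt_rpow_const |y| _ (Or.inl (abs_ne_zero.2 hy))).comp
        continuous_abs.continuousAt
    exact (continuousAt_const.add (continuousAt_const.mul h1)).sqrt
  refine intervalIntegral.integral_hasDerivAt_right (gint_integrable hκ hα0 hα1 0 x)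
    ?_ (hcont x hx.ne')
  exact ContinuousOn.stronglyMeasurableAtFilter isOpen_Ioi
    (continuousOn_of_forall_continuousAt fun y hy => hcont y (ne_of_gt hy)) x hx

lemma gfun_continuous (hκ : 0 < κ) (hα0 : 0 < α) (hα1 : α < 1/2) :
    Continuous (gfun κ α) :=
  intervalIntegral.continuous_primitive (gint_integrable hκ hα0 hα1) 0

/-- the hard derivative computation: F(s) = s f(s) - 2α g(s) has derivative (1-2α)/f(s) -/
lemma F_hasDeriv (hκ : 0 < κ) (hα0 : 0 < α) (hα1 : α < 1/2) {s : ℝ} (hs : 0 < s) :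
    HasDerivAt (fun u : ℝ => u * Real.sqrt (1 + 2*κ*α^2 * |u| ^ (2*(2*α-1))) - 2*α * gfun κ α u)
      ((1 - 2*α) / Real.sqrt (1 + 2*κ*α^2 * s ^ (2*(2*α-1)))) s := by
  set c : ℝ := 2*κ*α^2 with hc
  set p : ℝ := 2*(2*α-1) with hp
  have hcpos : 0 < c := by positivity
  have hV : (0:ℝ) < 1 + c * s ^ p := by
    have h2 : 0 ≤ c * s ^ p := mul_nonneg hcpos.le (Real.rpow_nonneg hs.le p)
    linarith
  have dA : HasDerivAt (fun u : ℝ => u ^ p) (p * s ^ (p-1)) s :=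
    Real.hasDerivAt_rpow_const (Or.inl hs.ne')
  have dU : HasDerivAt (fun u : ℝ => 1 + c * u ^ p) (c * (p * s ^ (p-1))) s :=
    (dA.const_mul c).const_add 1
  have dSq : HasDerivAt (fun u : ℝ => Real.sqrt (1 + c * u ^ p))
      (1 / (2 * Real.sqrt (1 + c * s ^ p)) * (c * (p * s ^ (p-1)))) s :=
    (Real.hasDerivAt_sqrt hV.ne').comp s dU
  have dT1 : HasDerivAt (fun u : ℝ => u * Real.sqrt (1 + c * u ^ p))
      (1 * Real.sqrt (1 + c * s ^ p)
        + s * (1 / (2 * Real.sqrt (1 + c * s ^ p)) * (c * (p * s ^ (p-1))))) s :=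
    (hasDerivAt_id s).mul dSq
  have dG : HasDerivAt (gfun κ α) (Real.sqrt (1 + c * |s| ^ p)) s :=
    gfun_hasDeriv hκ hα0 hα1 hs
  have dG' : HasDerivAt (gfun κ α) (Real.sqrt (1 + c * s ^ p)) s := by
    rwa [abs_of_pos hs] at dG
  have dF : HasDerivAt (fun u : ℝ => u * Real.sqrt (1 + c * u ^ p) - 2*α * gfun κ α u)
      (1 * Real.sqrt (1 + c * s ^ p)
        + s * (1 / (2 * Real.sqrt (1 + c * s ^ p)) * (c * (p * s ^ (p-1))))
        - 2*α * Real.sqrt (1 + c * s ^ p)) s :=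
    dT1.sub (dG'.const_mul (2*α))
  have heq : (fun u : ℝ => u * Real.sqrt (1 + c * |u| ^ p) - 2*α * gfun κ α u)
      =ᶠ[nhds s] (fun u : ℝ => u * Real.sqrt (1 + c * u ^ p) - 2*α * gfun κ α u) := by
    filter_upwards [eventually_gt_nhds hs] with u hu
    rw [abs_of_pos hu]
  have dF' := dF.congr_of_eventuallyEq heq
  refine dF'.congr_deriv (Eq.symm ?_)
  have hsqpos : 0 < Real.sqrt (1 + c * s ^ p) := Real.sqrt_pos.2 hV
  have hsq : Real.sqrt (1 + c * s ^ p) * Real.sqrt (1 + c * s ^ p) = 1 + c * s ^ p :=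
    Real.mul_self_sqrt hV.le
  have hps : s ^ (p-1) * s = s ^ p := by
    rw [Real.rpow_sub_one hs.ne']
    field_simp
  have hps' : s * (c * (p * s ^ (p - 1))) = c * p * s ^ p := by rw [← hps]; ring
  have hpval : p = 4*α - 2 := by rw [hp]; ring
  rw [div_eq_iff hsqpos.ne']
  have h1 : Real.sqrt (1 + c * s ^ p) * (1 / (2 * Real.sqrt (1 + c * s ^ p))) = 1/2 := by
    field_simp
  linear_combination (-(1-2*α))*hsq + (-(s*(c*(p*s^(p-1)))))*h1 + (-1/2)*hps'
    + (-(c*s^p)/2)*hpval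

end Stmt5Aux

theorem stmt5 (κ α : ℝ) (hκ : 0 < κ) (hα0 : 0 < α) (hα1 : α < 1/2) (h : ℝ → ℝ)
    (hinv1 : Function.LeftInverse h (gfun κ α)) (hinv2 : Function.RightInverse h (gfun κ α)) :
    ∀ t : ℝ, 0 < t → 2*α * h t ≤ 2*α * deriv h t * t ∧ 2*α * deriv h t * t ≤ h t := by
  intro t ht
  classical
  set f : ℝ → ℝ := fun s => Real.sqrt (1 + 2*κ*α^2 * |s| ^ (2*(2*α-1))) with hfdef
  have hgmono : StrictMono (gfun κ α) := Stmt5Aux.gfun_strictMono hκ hα0 hα1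
  have hhmono : StrictMono h := by
    intro a b hab
    by_contra hcon
    push_neg at hcon
    have h2 := hgmono.monotone hcon
    rw [hinv2, hinv2] at h2
    linarith
  have hhsurj : Function.Surjective h := fun x => ⟨gfun κ α x, hinv1 x⟩
  have hhcont : Continuous h := hhmono.monotone.continuous_of_surjective hhsurj
  have hg0 : gfun κ α 0 = 0 := intervalIntegral.integral_same
  have hx : 0 < h t := by
    by_contra hc
    push_neg at hc
    have h2 := hgmono.monotone hc
    rw [hinv2, hg0] at h2
    linarith
  have ht_eq : gfun κ α (h t) = t := hinv2 t
  have hdg : HasDerivAt (gfun κ α) (f (h t)) (h t) := Stmt5Aux.gfun_hasDeriv hκ hα0 hα1 hx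
  have hfx_pos : 0 < f (h t) := lt_of_lt_of_le one_pos (Stmt5Aux.gint_one_le hκ _)
  have hdh : HasDerivAt h (f (h t))⁻¹ t :=
    hdg.of_local_left_inverse hhcont.continuousAt hfx_pos.ne'
      (Filter.Eventually.of_forall hinv2)
  have hderiv : deriv h t = (f (h t))⁻¹ := hdh.deriv
  set x := h t with hxdef
  -- left key:  x * f x ≤ gfun x
  have hleft : x * f x ≤ gfun κ α x := by
    have hae : (fun _ : ℝ => f x) ≤ᵐ[volume.restrict (Icc 0 x)] f := by
      have h0 : ∀ᵐ s ∂(volume.restrict (Icc (0:ℝ) x)), s ≠ 0 := by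
        refine ae_restrict_of_ae ?_
        have hset : {s : ℝ | ¬ s ≠ 0} = {0} := by ext s; simp
        rw [ae_iff, hset]
        exact measure_singleton 0
      filter_upwards [ae_restrict_mem measurableSet_Icc, h0] with s hsIcc hs0
      have hs : 0 < s := lt_of_le_of_ne hsIcc.1 (Ne.symm hs0)
      have hrp : x ^ (2*(2*α-1)) ≤ s ^ (2*(2*α-1)) :=
        Real.rpow_le_rpow_of_nonpos hs hsIcc.2 (by linarith)
      simp only [hfdef]
      apply Real.sqrt_le_sqrt
      rw [abs_of_pos hs, abs_of_pos hx]
      have : (0:ℝ) < 2*κ*α^2 := by positivity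
      nlinarith
    have hmono := intervalIntegral.integral_mono_ae_restrict hx.le
      intervalIntegrable_const (Stmt5Aux.gint_integrable hκ hα0 hα1 0 x) hae
    calc x * f x = ∫ _ in (0:ℝ)..x, f x := by
          rw [intervalIntegral.integral_const, smul_eq_mul, sub_zero]
    _ ≤ ∫ s in (0:ℝ)..x, f s := hmono
    _ = gfun κ α x := rfl
  -- right key: 2α * gfun x ≤ x * f x
  have hright : 2*α * gfun κ α x ≤ x * f x := by
    set F : ℝ → ℝ := fun u => u * f u - 2*α * gfun κ α u with hFdef
    have hF : ∀ s ∈ Ioi (0:ℝ), HasDerivAt F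
        ((1 - 2*α) / Real.sqrt (1 + 2*κ*α^2 * s ^ (2*(2*α-1)))) s :=
      fun s hs => Stmt5Aux.F_hasDeriv hκ hα0 hα1 hs
    have hFmono : StrictMonoOn F (Ioi 0) := by
      refine strictMonoOn_of_deriv_pos (convex_Ioi 0)
        (fun s hs => ((hF s hs).continuousAt).continuousWithinAt) ?_
      rw [interior_Ioi]
      intro s hs
      rw [(hF s hs).deriv]
      have hV : (0:ℝ) < 1 + 2*κ*α^2 * s ^ (2*(2*α-1)) := by
        have := Real.rpow_nonneg (le_of_lt (mem_Ioi.1 hs)) (2*(2*α-1))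
        have hc : (0:ℝ) < 2*κ*α^2 := by positivity
        nlinarith
      have := Real.sqrt_pos.2 hV
      have h12 : (0:ℝ) < 1 - 2*α := by linarith
      positivity
    -- limit of F at 0+
    have hlim : Tendsto F (nhdsWithin 0 (Ioi 0)) (nhds 0) := by
      have hgc : Tendsto (fun s => gfun κ α s) (nhdsWithin 0 (Ioi 0)) (nhds 0) := by
        have := (Stmt5Aux.gfun_continuous hκ hα0 hα1).tendsto 0
        rw [hg0] at this
        exact this.mono_left nhdsWithin_le_nhds
      have ht1 : Tendsto (fun s : ℝ => s * f s) (nhdsWithin 0 (Ioi 0)) (nhds 0) := by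
        have hub : Tendsto (fun s : ℝ => s + Real.sqrt (2*κ*α^2) * s ^ (2*α))
            (nhdsWithin 0 (Ioi 0)) (nhds 0) := by
          have h1 : Tendsto (fun s : ℝ => s ^ (2*α)) (nhds 0) (nhds 0) := by
            have hc := Real.continuousAt_rpow_const 0 (2*α) (Or.inr (by linarith))
            have h0 : (0:ℝ) ^ (2*α) = 0 := Real.zero_rpow (by linarith)
            simpa [ContinuousAt, h0] using hc
          have h2 : Tendsto (fun s : ℝ => s + Real.sqrt (2*κ*α^2) * s ^ (2*α))
              (nhds 0) (nhds 0) := by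
            have h3 := tendsto_id.add (h1.const_mul (Real.sqrt (2*κ*α^2)))
            simpa using h3
          exact h2.mono_left nhdsWithin_le_nhds
        refine squeeze_zero' ?_ ?_ hub
        · filter_upwards [self_mem_nhdsWithin] with s hs
          have hs' : 0 < s := hs
          have := Stmt5Aux.gint_one_le (α := α) hκ s
          nlinarith
        · filter_upwards [self_mem_nhdsWithin] with s hs
          have hs' : (0:ℝ) < s := hs
          have hb := Stmt5Aux.gint_bound (α := α) hκ hα0 s
          have hmul : s * (1 + Real.sqrt (2*κ*α^2) * |s| ^ (2*α-1))
              = s + Real.sqrt (2*κ*α^2) * s ^ (2*α) := by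
            rw [abs_of_pos hs']
            have h5 : s * s ^ (2*α-1) = s ^ (2*α) := by
              nth_rewrite 1 [← Real.rpow_one s]
              rw [← Real.rpow_add hs']
              congr 1
              ring
            calc s * (1 + Real.sqrt (2*κ*α^2) * s ^ (2*α-1))
                = s + Real.sqrt (2*κ*α^2) * (s * s ^ (2*α-1)) := by ring
            _ = s + Real.sqrt (2*κ*α^2) * s ^ (2*α) := by rw [h5]
          calc s * f s ≤ s * (1 + Real.sqrt (2*κ*α^2) * |s| ^ (2*α-1)) := by
                exact mul_le_mul_of_nonneg_left hb hs'.le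
          _ = s + Real.sqrt (2*κ*α^2) * s ^ (2*α) := hmul
      have := ht1.sub (hgc.const_mul (2*α))
      simpa using this
    have hFx : 0 ≤ F x := by
      refine le_of_tendsto hlim ?_
      filter_upwards [Ioo_mem_nhdsGT_of_mem ⟨le_refl (0:ℝ), hx⟩] with s hs
      exact (hFmono (mem_Ioi.2 hs.1) (mem_Ioi.2 hx) hs.2).le
    have : x * f x - 2*α * gfun κ α x = F x := rfl
    linarith [hFx]
  -- assemble
  rw [hderiv]
  rw [← hxdef] at *
  rw [← ht_eq]
  constructor
  · have key : x ≤ (f x)⁻¹ * gfun κ α x := by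
      rw [inv_mul_eq_div, le_div_iff₀ hfx_pos]
      exact hleft
    calc 2*α*x ≤ 2*α*((f x)⁻¹ * gfun κ α x) :=
          mul_le_mul_of_nonneg_left key (by linarith)
    _ = 2*α*(f x)⁻¹*gfun κ α x := by ring
  · have key : (f x)⁻¹ * (2*α * gfun κ α x) ≤ x := by
      rw [inv_mul_eq_div, div_le_iff₀ hfx_pos]
      nlinarith [hright]
    calc 2*α*(f x)⁻¹*gfun κ α x = (f x)⁻¹ * (2*α * gfun κ α x) := by ring
    _ ≤ x := key
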